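/- There exists a constant C > 0 such that the Gaussian isoperimetric profile satisfies I(x) ≥ C · x(1-x) · √(log(1/(x(1-x)))) for all x ∈ (0,1). -/

import Mathlib

open Real

noncomputable def gaussPhi (x : ℝ) : ℝ := (Real.sqrt (2 * Real.pi))⁻¹ * Real.exp (-x ^ 2 / 2)

noncomputable def gaussCDF (x : ℝ) : ℝ := ∫ t in Set.Iic x, gaussPhi t

noncomputable def isoProfile (s : ℝ) : ℝ :=
  if s = 0 ∨ s = 1 then 0 else gaussPhi (Function.invFun gaussCDF s)

section Aux

open MeasureTheory Set Filter

lemma gaussPhi_pos (x : ℝ) : 0 < gaussPhi x := by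
  unfold gaussPhi
  positivity

lemma gaussPhi_even (x : ℝ) : gaussPhi (-x) = gaussPhi x := by
  simp [gaussPhi]

lemma gaussPhi_eq (x : ℝ) : gaussPhi x = (Real.sqrt (2 * Real.pi))⁻¹ * Real.exp (-(1/2) * x ^ 2) := by
  unfold gaussPhi; ring_nf

lemma integrable_gaussPhi : Integrable gaussPhi := by
  have h := (integrable_exp_neg_mul_sq (by norm_num : (0:ℝ) < 1/2)).const_mul (Real.sqrt (2 * Real.pi))⁻¹
  refine h.congr ?_
  filter_upwards with x
  rw [gaussPhi_eq]

lemma sqrt_two_pi_pos : 0 < Real.sqrt (2 * Real.pi) := Real.sqrt_pos.2 (by positivity)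

lemma integral_gaussPhi : ∫ x, gaussPhi x = 1 := by
  have h : ∫ x : ℝ, Real.exp (-(1/2) * x ^ 2) = Real.sqrt (π / (1/2)) := integral_gaussian (1/2)
  have h2 : (π / (1/2 : ℝ)) = 2 * π := by ring
  rw [h2] at h
  calc ∫ x, gaussPhi x = ∫ x, (Real.sqrt (2 * Real.pi))⁻¹ * Real.exp (-(1/2) * x ^ 2) := by
        congr 1; ext x; rw [gaussPhi_eq]
    _ = (Real.sqrt (2 * Real.pi))⁻¹ * ∫ x, Real.exp (-(1/2) * x ^ 2) := by
        rw [MeasureTheory.integral_const_mul]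
    _ = 1 := by rw [h]; field_simp

lemma gaussCDF_add_tail (x : ℝ) : gaussCDF x + ∫ t in Set.Ioi x, gaussPhi t = 1 := by
  have := integral_add_compl (measurableSet_Iic (a := x)) integrable_gaussPhi
  rw [Set.compl_Iic] at this
  rw [gaussCDF, this, integral_gaussPhi]

lemma tail_eq (x : ℝ) : (∫ t in Set.Ioi x, gaussPhi t) = gaussCDF (-x) := by
  calc (∫ t in Set.Ioi x, gaussPhi t) = ∫ t in Set.Ioi x, gaussPhi (-t) := by
        simp only [gaussPhi_even]
    _ = ∫ t in Set.Iic (-x), gaussPhi t := integral_comp_neg_Ioi x gaussPhi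
    _ = gaussCDF (-x) := rfl


lemma gaussCDF_mono : Monotone gaussCDF := by
  intro a b hab
  apply setIntegral_mono_set integrable_gaussPhi.integrableOn
  · filter_upwards with x using (gaussPhi_pos x).le
  · exact HasSubset.Subset.eventuallyLE (Iic_subset_Iic.2 hab)

lemma gaussCDF_zero : gaussCDF 0 = 1/2 := by
  have h := gaussCDF_add_tail 0
  rw [tail_eq, neg_zero] at h
  linarith

lemma sqrt_two_pi_ge_one : 1 ≤ Real.sqrt (2 * Real.pi) := by
  rw [show (1:ℝ) = Real.sqrt 1 by simp]
  apply Real.sqrt_le_sqrt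
  nlinarith [Real.pi_gt_three]

lemma gaussPhi_le_one (x : ℝ) : gaussPhi x ≤ 1 := by
  unfold gaussPhi
  have h1 : Real.exp (-x ^ 2 / 2) ≤ 1 := by
    rw [Real.exp_le_one_iff]
    nlinarith [sq_nonneg x]
  have h2 : (Real.sqrt (2 * Real.pi))⁻¹ ≤ 1 := by
    rw [inv_le_one_iff₀]; right; exact sqrt_two_pi_ge_one
  nlinarith [Real.exp_pos (-x ^ 2 / 2), sqrt_two_pi_pos]

lemma gaussCDF_sub (a b : ℝ) (hab : a ≤ b) :
    gaussCDF b - gaussCDF a = ∫ t in Set.Ioc a b, gaussPhi t := by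
  have hu : Set.Iic a ∪ Set.Ioc a b = Set.Iic b := Set.Iic_union_Ioc_eq_Iic hab
  have hd : Disjoint (Set.Iic a) (Set.Ioc a b) := Set.Iic_disjoint_Ioc le_rfl
  have h := setIntegral_union (f := gaussPhi) (μ := volume) hd measurableSet_Ioc
    integrable_gaussPhi.integrableOn integrable_gaussPhi.integrableOn
  rw [hu] at h
  rw [gaussCDF, gaussCDF, h]
  ring

lemma continuous_gaussCDF : Continuous gaussCDF := by
  have key : ∀ a b : ℝ, a ≤ b → gaussCDF b - gaussCDF a ≤ b - a := by
    intro a b hab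
    rw [gaussCDF_sub a b hab]
    calc (∫ t in Set.Ioc a b, gaussPhi t) ≤ ∫ _t in Set.Ioc a b, (1:ℝ) := by
          apply setIntegral_mono_on integrable_gaussPhi.integrableOn
            (integrableOn_const (by simp)) measurableSet_Ioc
          intro x _; exact gaussPhi_le_one x
      _ = b - a := by
          simp [Real.volume_Ioc, ENNReal.toReal_ofReal (sub_nonneg.2 hab), max_eq_left (sub_nonneg.2 hab)]
  have hlip : LipschitzWith 1 gaussCDF := by
    apply LipschitzWith.of_dist_le_mul
    intro a b
    rw [Real.dist_eq, Real.dist_eq, NNReal.coe_one, one_mul]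
    rcases le_total a b with h | h
    · rw [abs_sub_comm, abs_of_nonneg (sub_nonneg.2 (gaussCDF_mono h)),
        abs_sub_comm, abs_of_nonneg (sub_nonneg.2 h)]
      exact key a b h
    · rw [abs_of_nonneg (sub_nonneg.2 (gaussCDF_mono h)), abs_of_nonneg (sub_nonneg.2 h)]
      exact key b a h
  exact hlip.continuous


lemma continuous_gaussPhi : Continuous gaussPhi := by
  unfold gaussPhi; fun_prop

lemma hasDerivAt_gaussPhi (x : ℝ) : HasDerivAt gaussPhi (-x * gaussPhi x) x := by
  have h1 : HasDerivAt (fun s : ℝ => -s ^ 2 / 2) (-x) x := by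
    have := ((hasDerivAt_pow 2 x).neg).div_const 2
    exact this.congr_deriv (by push_cast; ring)
  have h2 := (h1.exp).const_mul (Real.sqrt (2 * Real.pi))⁻¹
  exact h2.congr_deriv (by unfold gaussPhi; ring)

lemma tendsto_gaussPhi_atTop : Tendsto gaussPhi atTop (nhds 0) := by
  have h1 : Tendsto (fun s : ℝ => -s ^ 2 / 2) atTop atBot := by
    apply Tendsto.atBot_div_const (by norm_num)
    apply tendsto_neg_atBot_iff.2
    exact tendsto_pow_atTop (by norm_num)
  have h2 := (Real.tendsto_exp_atBot.comp h1).const_mul (Real.sqrt (2 * Real.pi))⁻¹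
  rw [mul_zero] at h2
  refine h2.congr fun s => ?_
  simp [gaussPhi, Function.comp]

lemma integrableOn_id_mul_gaussPhi (t : ℝ) :
    IntegrableOn (fun s => s * gaussPhi s) (Set.Ioi t) := by
  have h := (integrable_mul_exp_neg_mul_sq (by norm_num : (0:ℝ) < 1/2)).const_mul
    (Real.sqrt (2 * Real.pi))⁻¹
  refine (h.congr ?_).integrableOn
  filter_upwards with x
  rw [gaussPhi_eq]; ring

lemma integral_Ioi_id_mul_gaussPhi (t : ℝ) :
    ∫ s in Set.Ioi t, s * gaussPhi s = gaussPhi t := by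
  have h := integral_Ioi_of_hasDerivAt_of_tendsto
    (f := fun s => -gaussPhi s) (f' := fun s => s * gaussPhi s) (a := t)
    (continuous_gaussPhi.neg.continuousWithinAt)
    (fun x _ => by have h := (hasDerivAt_gaussPhi x).neg; simp only [neg_mul, neg_neg] at h; exact h)
    (integrableOn_id_mul_gaussPhi t)
    (by simpa using tendsto_gaussPhi_atTop.neg)
  simpa using h

lemma mills_upper {t : ℝ} (ht : 0 < t) :
    (∫ s in Set.Ioi t, gaussPhi s) * t ≤ gaussPhi t := by
  rw [← integral_Ioi_id_mul_gaussPhi t]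
  have h1 : (∫ s in Set.Ioi t, gaussPhi s) * t = ∫ s in Set.Ioi t, t * gaussPhi s := by
    rw [mul_comm]; exact (integral_const_mul t _).symm
  rw [h1]
  apply setIntegral_mono_on (integrable_gaussPhi.integrableOn.const_mul t)
    (integrableOn_id_mul_gaussPhi t) measurableSet_Ioi
  intro x hx
  exact mul_le_mul_of_nonneg_right (le_of_lt hx) (gaussPhi_pos x).le

lemma integrableOn_gaussPhi_mul_one_add_inv_sq {t : ℝ} (ht : 0 < t) :
    IntegrableOn (fun s => gaussPhi s * (1 + (s⁻¹) ^ 2)) (Set.Ioi t) := by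
  apply Integrable.mono' ((integrable_gaussPhi.integrableOn.const_mul (1 + (t⁻¹)^2)))
  · apply Measurable.aestronglyMeasurable
    exact (continuous_gaussPhi.measurable).mul
      ((measurable_const.add ((measurable_id'.inv).pow measurable_const)))
  · filter_upwards [ae_restrict_mem measurableSet_Ioi] with x hx
    have hx0 : 0 < x := ht.trans hx
    have h2 : (x⁻¹)^2 ≤ (t⁻¹)^2 := by
      apply pow_le_pow_left₀ (by positivity)
      exact inv_anti₀ ht (le_of_lt hx)
    rw [Real.norm_eq_abs, abs_of_nonneg (mul_nonneg (gaussPhi_pos x).le (by positivity))]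
    rw [mul_comm ((1:ℝ) + (t⁻¹)^2) (gaussPhi x)]
    apply mul_le_mul_of_nonneg_left (by linarith) (gaussPhi_pos x).le

lemma integral_Ioi_gaussPhi_mul {t : ℝ} (ht : 0 < t) :
    ∫ s in Set.Ioi t, gaussPhi s * (1 + (s⁻¹) ^ 2) = gaussPhi t / t := by
  have h := integral_Ioi_of_hasDerivAt_of_tendsto
    (f := fun s => -(gaussPhi s * s⁻¹)) (f' := fun s => gaussPhi s * (1 + (s⁻¹) ^ 2)) (a := t) (m := 0)
    ?_ ?_ (integrableOn_gaussPhi_mul_one_add_inv_sq ht) ?_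
  · rw [h]; field_simp; ring
  · apply ContinuousAt.continuousWithinAt
    exact ((continuous_gaussPhi.continuousAt).mul (continuousAt_inv₀ (ne_of_gt ht))).neg
  · intro x hx
    have hx0 : 0 < x := ht.trans hx
    have h1 := ((hasDerivAt_gaussPhi x).mul (hasDerivAt_inv (ne_of_gt hx0))).neg
    convert h1 using 1
    · rfl
    field_simp
    ring
  · have h2 : Tendsto (fun s : ℝ => gaussPhi s * s⁻¹) atTop (nhds 0) := by
      have := tendsto_gaussPhi_atTop.mul tendsto_inv_atTop_zero
      simpa using this
    simpa using h2.neg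

lemma mills_lower {t : ℝ} (ht : 0 < t) :
    gaussPhi t * t ≤ (1 + t ^ 2) * ∫ s in Set.Ioi t, gaussPhi s := by
  have h1 : gaussPhi t / t ≤ (1 + (t⁻¹) ^ 2) * ∫ s in Set.Ioi t, gaussPhi s := by
    rw [← integral_Ioi_gaussPhi_mul ht, ← integral_const_mul]
    apply setIntegral_mono_on (integrableOn_gaussPhi_mul_one_add_inv_sq ht)
      (integrable_gaussPhi.integrableOn.const_mul _) measurableSet_Ioi
    intro x hx
    have hx0 : 0 < x := ht.trans hx
    have h2 : (x⁻¹)^2 ≤ (t⁻¹)^2 := by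
      apply pow_le_pow_left₀ (by positivity)
      exact inv_anti₀ ht (le_of_lt hx)
    rw [mul_comm ((1:ℝ) + (t⁻¹)^2) (gaussPhi x)]
    apply mul_le_mul_of_nonneg_left (by linarith) (gaussPhi_pos x).le
  have h3 := mul_le_mul_of_nonneg_right h1 (le_of_lt (mul_pos ht ht))
  have ht' : t ≠ 0 := ne_of_gt ht
  calc gaussPhi t * t = gaussPhi t / t * (t * t) := by field_simp
    _ ≤ (1 + (t⁻¹) ^ 2) * (∫ s in Set.Ioi t, gaussPhi s) * (t * t) := h3
    _ = (1 + t ^ 2) * ∫ s in Set.Ioi t, gaussPhi s := by field_simp; ring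


lemma exists_gaussCDF_eq {x : ℝ} (hx : x ∈ Set.Ioo (0:ℝ) 1) : ∃ t, gaussCDF t = x := by
  obtain ⟨hx0, hx1⟩ := hx
  set m : ℝ := min x (1 - x) with hm
  have hm0 : 0 < m := lt_min hx0 (by linarith)
  set A : ℝ := 1/m + 1 with hA
  have hA0 : 0 < A := by positivity
  have hAm : 1/A < m := by
    rw [div_lt_iff₀ hA0, hA]
    have : 1/m * m = 1 := by field_simp
    nlinarith
  have htail : (∫ s in Set.Ioi A, gaussPhi s) ≤ 1/A := by
    have h1 := mills_upper hA0
    have h2 : gaussPhi A ≤ 1 := gaussPhi_le_one A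
    rw [le_div_iff₀ hA0]
    linarith
  have hlow : gaussCDF (-A) ≤ 1/A := by rw [← tail_eq]; exact htail
  have hup : 1 - 1/A ≤ gaussCDF A := by
    have := gaussCDF_add_tail A
    linarith
  have hxIcc : x ∈ Set.Icc (gaussCDF (-A)) (gaussCDF A) := by
    constructor
    · have : m ≤ x := min_le_left _ _
      linarith
    · have : m ≤ 1 - x := min_le_right _ _
      linarith
  have := intermediate_value_Icc (by linarith : -A ≤ A) continuous_gaussCDF.continuousOn hxIcc
  obtain ⟨t, _, ht⟩ := this
  exact ⟨t, ht⟩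

-- numeric bounds
lemma exp_half_le : Real.exp (1/2 : ℝ) ≤ 1.6488 := by
  have h : Real.exp (1/2 : ℝ) ^ 2 = Real.exp 1 := by
    rw [← Real.exp_nat_mul]; norm_num
  have h2 : Real.exp 1 ≤ 1.6488 ^ 2 := by
    nlinarith [Real.exp_one_lt_d9]
  nlinarith [Real.exp_pos (1/2 : ℝ)]

lemma exp_half_ge : (1.5 : ℝ) ≤ Real.exp (1/2 : ℝ) := by
  nlinarith [Real.add_one_le_exp (1/2 : ℝ)]

lemma exp_nine_half_eq : Real.exp (9/2 : ℝ) = Real.exp (1/2 : ℝ) ^ 9 := by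
  rw [← Real.exp_nat_mul]; norm_num

lemma exp_nine_half_le : Real.exp (9/2 : ℝ) ≤ 90.1 := by
  rw [exp_nine_half_eq]
  calc Real.exp (1/2 : ℝ) ^ 9 ≤ 1.6488 ^ 9 :=
        pow_le_pow_left₀ (Real.exp_pos _).le exp_half_le 9
    _ ≤ 90.1 := by norm_num

lemma exp_nine_half_ge : (38.4 : ℝ) ≤ Real.exp (9/2 : ℝ) := by
  rw [exp_nine_half_eq]
  calc (38.4 : ℝ) ≤ 1.5 ^ 9 := by norm_num
    _ ≤ Real.exp (1/2 : ℝ) ^ 9 := pow_le_pow_left₀ (by norm_num) exp_half_ge 9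

lemma exp_nine_ge : (1568 : ℝ) ≤ Real.exp 9 := by
  have h : Real.exp (9 : ℝ) = Real.exp 1 ^ 9 := by
    rw [← Real.exp_nat_mul]; norm_num
  rw [h]
  calc (1568:ℝ) ≤ 2.71828 ^ 9 := by norm_num
    _ ≤ Real.exp 1 ^ 9 := pow_le_pow_left₀ (by norm_num) (by nlinarith [Real.exp_one_gt_d9]) 9

lemma sqrt_two_pi_le : Real.sqrt (2 * Real.pi) ≤ 2.6 := by
  rw [show (2.6:ℝ) = Real.sqrt (2.6 ^ 2) by rw [Real.sqrt_sq]; norm_num]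
  apply Real.sqrt_le_sqrt
  nlinarith [Real.pi_lt_d2]

lemma gaussPhi_three_ge : (1/235 : ℝ) ≤ gaussPhi 3 := by
  unfold gaussPhi
  have h1 : Real.exp (-(3:ℝ) ^ 2 / 2) = (Real.exp (9/2 : ℝ))⁻¹ := by
    rw [← Real.exp_neg]; norm_num
  rw [h1]
  have h2 : (Real.exp (9/2 : ℝ))⁻¹ ≥ 1/90.1 := by
    rw [ge_iff_le, one_div]
    exact inv_anti₀ (Real.exp_pos _) exp_nine_half_le
  have h3 : (Real.sqrt (2 * Real.pi))⁻¹ ≥ 1/2.6 := by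
    rw [ge_iff_le, one_div]
    exact inv_anti₀ sqrt_two_pi_pos sqrt_two_pi_le
  nlinarith [sqrt_two_pi_pos, Real.exp_pos (9/2 : ℝ)]

lemma tail_three_ge : (1/784 : ℝ) ≤ ∫ s in Set.Ioi (3:ℝ), gaussPhi s := by
  have h := mills_lower (by norm_num : (0:ℝ) < 3)
  have h2 := gaussPhi_three_ge
  nlinarith

lemma tail_mono {a b : ℝ} (hab : a ≤ b) :
    (∫ s in Set.Ioi b, gaussPhi s) ≤ ∫ s in Set.Ioi a, gaussPhi s := by
  apply setIntegral_mono_set integrable_gaussPhi.integrableOn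
  · filter_upwards with x using (gaussPhi_pos x).le
  · exact HasSubset.Subset.eventuallyLE (Set.Ioi_subset_Ioi hab)

lemma key_step {t : ℝ} (ht : 0 ≤ t) :
    (1/1000) * (1 - gaussCDF t) * Real.sqrt (Real.log (2 / (1 - gaussCDF t))) ≤ gaussPhi t := by
  set q := 1 - gaussCDF t with hqdef
  have hq_tail : q = ∫ s in Set.Ioi t, gaussPhi s := by
    have := gaussCDF_add_tail t; linarith
  have h12 : (1/2:ℝ) ≤ gaussCDF t := by
    have := gaussCDF_mono ht; rwa [gaussCDF_zero] at this
  have hq_le : q ≤ 1/2 := by rw [hqdef]; linarith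
  rcases le_total t 3 with hcase | hcase
  · have hq_ge : (1/784 : ℝ) ≤ q := by
      rw [hq_tail]; exact le_trans tail_three_ge (tail_mono hcase)
    have hq_pos : 0 < q := by linarith
    have hlog : Real.log (2 / q) ≤ 9 := by
      rw [Real.log_le_iff_le_exp (by positivity)]
      calc 2 / q ≤ 2 / (1/784) := by
            apply div_le_div_of_nonneg_left (by norm_num) (by norm_num) hq_ge
        _ = 1568 := by norm_num
        _ ≤ Real.exp 9 := exp_nine_ge
    have hsqrt : Real.sqrt (Real.log (2/q)) ≤ 3 := by
      calc Real.sqrt (Real.log (2/q)) ≤ Real.sqrt 9 := Real.sqrt_le_sqrt hlog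
        _ = 3 := by rw [show (9:ℝ) = 3^2 by norm_num, Real.sqrt_sq (by norm_num)]
    have hphi : (1/235 : ℝ) ≤ gaussPhi t := by
      refine le_trans gaussPhi_three_ge ?_
      unfold gaussPhi
      apply mul_le_mul_of_nonneg_left _ (inv_nonneg.2 (Real.sqrt_nonneg _))
      apply Real.exp_le_exp.2
      nlinarith
    have hs_nonneg : 0 ≤ Real.sqrt (Real.log (2/q)) := Real.sqrt_nonneg _
    nlinarith [mul_le_mul hq_le hsqrt hs_nonneg (by norm_num : (0:ℝ) ≤ 1/2)]
  · have ht0 : (0:ℝ) < t := by linarith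
    have hup := mills_upper ht0
    have hlow := mills_lower ht0
    rw [← hq_tail] at hup hlow
    have hq_pos : 0 < q := by nlinarith [gaussPhi_pos t]
    have hE : 12 * t ≤ Real.exp (t^2/2) := by
      have e1 : Real.exp (t^2/2) = Real.exp (9/2) * Real.exp ((t^2-9)/2) := by
        rw [← Real.exp_add]; ring_nf
      have e2 : 1 + (t^2-9)/2 ≤ Real.exp ((t^2-9)/2) := by
        have := Real.add_one_le_exp ((t^2-9)/2); linarith
      have e3 : (0:ℝ) ≤ (t^2-9)/2 := by nlinarith
      rw [e1]
      nlinarith [exp_nine_half_ge, Real.exp_pos ((t^2-9)/2), sq_nonneg (t-3)]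
    have hS : (1/2.6 : ℝ) ≤ (Real.sqrt (2*Real.pi))⁻¹ := by
      rw [one_div]
      exact inv_anti₀ sqrt_two_pi_pos sqrt_two_pi_le
    have hQ2 : 2 ≤ q * Real.exp (t^2) := by
      have hphi_eq : gaussPhi t * Real.exp (t^2) = (Real.sqrt (2*Real.pi))⁻¹ * Real.exp (t^2/2) := by
        unfold gaussPhi
        rw [mul_assoc, ← Real.exp_add]; ring_nf
      have h4 := mul_le_mul_of_nonneg_right hlow (Real.exp_pos (t^2)).le
      have a1 : (1/2.6) * (12*t) * t ≤ (Real.sqrt (2*Real.pi))⁻¹ * Real.exp (t^2/2) * t := by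
        apply mul_le_mul_of_nonneg_right _ ht0.le
        exact mul_le_mul hS hE (by positivity) (by positivity)
      have a2 : 2 * (1+t^2) ≤ (1/2.6) * (12*t) * t := by nlinarith
      have a3 : gaussPhi t * t * Real.exp (t^2) = (Real.sqrt (2*Real.pi))⁻¹ * Real.exp (t^2/2) * t := by
        rw [show gaussPhi t * t * Real.exp (t^2) = gaussPhi t * Real.exp (t^2) * t by ring, hphi_eq]
      have a4 : 2 * (1+t^2) ≤ (1+t^2) * (q * Real.exp (t^2)) := by
        calc 2 * (1+t^2) ≤ (1/2.6) * (12*t) * t := a2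
          _ ≤ (Real.sqrt (2*Real.pi))⁻¹ * Real.exp (t^2/2) * t := a1
          _ = gaussPhi t * t * Real.exp (t^2) := a3.symm
          _ ≤ (1+t^2) * (∫ s in Set.Ioi t, gaussPhi s) * Real.exp (t^2) := by
              rw [← hq_tail]; exact h4
          _ = (1+t^2) * (q * Real.exp (t^2)) := by rw [← hq_tail]; ring
      have h1t : (0:ℝ) < 1 + t^2 := by positivity
      nlinarith
    have hlog : Real.log (2/q) ≤ t^2 := by
      rw [Real.log_le_iff_le_exp (by positivity), div_le_iff₀ hq_pos]
      linarith
    have hsqrt : Real.sqrt (Real.log (2/q)) ≤ t := by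
      calc Real.sqrt (Real.log (2/q)) ≤ Real.sqrt (t^2) := Real.sqrt_le_sqrt hlog
        _ = t := Real.sqrt_sq ht
    have h5 : q * Real.sqrt (Real.log (2/q)) ≤ q * t :=
      mul_le_mul_of_nonneg_left hsqrt hq_pos.le
    nlinarith [h5, hup, mul_nonneg hq_pos.le (Real.sqrt_nonneg (Real.log (2/q)))]

lemma key {t : ℝ} (ht : 0 ≤ t) (hq : 0 < 1 - gaussCDF t) :
    (1/1000) * (gaussCDF t * (1 - gaussCDF t)) *
      Real.sqrt (Real.log (1 / (gaussCDF t * (1 - gaussCDF t)))) ≤ gaussPhi t := by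
  set p := gaussCDF t with hpdef
  set q := 1 - p with hqdef
  have hp : (1/2:ℝ) ≤ p := by
    have := gaussCDF_mono ht; rwa [gaussCDF_zero] at this
  have hp1 : p ≤ 1 := by rw [hpdef]; linarith [hq]
  have hpq_pos : 0 < p * q := mul_pos (by linarith) hq
  have h1 : 1/(p*q) ≤ 2/q := by
    rw [div_le_div_iff₀ hpq_pos hq]; nlinarith
  have h2 : Real.sqrt (Real.log (1/(p*q))) ≤ Real.sqrt (Real.log (2/q)) :=
    Real.sqrt_le_sqrt (Real.log_le_log (by positivity) h1)
  calc (1/1000) * (p*q) * Real.sqrt (Real.log (1/(p*q)))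
      ≤ (1/1000) * q * Real.sqrt (Real.log (2/q)) := by
        apply mul_le_mul _ h2 (Real.sqrt_nonneg _) (by positivity)
        nlinarith
    _ ≤ gaussPhi t := key_step ht


end Aux

open MeasureTheory Set Filter in
theorem stmt2 :
    ∃ C > 0, ∀ x ∈ Set.Ioo (0:ℝ) 1,
      C * (x * (1 - x)) * Real.sqrt (Real.log (1 / (x * (1 - x)))) ≤ isoProfile x := by
  refine ⟨1/1000, by norm_num, ?_⟩
  intro x hx
  obtain ⟨hx0, hx1⟩ := hx
  have hsurj : gaussCDF (Function.invFun gaussCDF x) = x :=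
    Function.invFun_eq (exists_gaussCDF_eq ⟨hx0, hx1⟩)
  set u := Function.invFun gaussCDF x with hu
  have hiso : isoProfile x = gaussPhi u := by
    rw [isoProfile, if_neg]
    push_neg
    exact ⟨ne_of_gt hx0, ne_of_lt hx1⟩
  rw [hiso]
  rcases le_or_gt 0 u with hu0 | hu0
  · have h := key hu0 (by rw [hsurj]; linarith)
    rwa [hsurj] at h
  · have hnu : (0:ℝ) ≤ -u := by linarith
    have hcdf_neg : gaussCDF (-u) = 1 - x := by
      rw [← tail_eq]
      have := gaussCDF_add_tail u
      rw [hsurj] at this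
      linarith
    have h := key hnu (by rw [hcdf_neg]; linarith)
    rw [hcdf_neg, gaussPhi_even] at h
    have e1 : (1 - x) * (1 - (1-x)) = x * (1 - x) := by ring
    rwa [e1] at h
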